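/- Let q ≥ 1. (a) Every continuous map f : Δ_0^{2(q-1)} → ℝ (equivalently, every assignment of a real number to each of the 2q−1 vertices) admits at least (q−1)! winding partitions, where winding partitions are taken with d = 1. (b) Every continuous map f : Δ^{2(q-1)} → ℝ admits at least (q−1)! Tverberg partitions. -/

import Mathlib

open scoped BigOperators

noncomputable section

/-- Euclidean space `ℝ^d`. -/
abbrev Euc (d : ℕ) : Type := EuclideanSpace ℝ (Fin d)

/-- The standard `N`-simplex `Δ^N ⊆ ℝ^{N+1}`. -/
def stdSimp (N : ℕ) : Set (Fin (N+1) → ℝ) :=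
  {x | (∀ i, 0 ≤ x i) ∧ ∑ i, x i = 1}

/-- The face `σ_S` of `Δ^N` spanned by the vertices in `S`. -/
def simpFace {N : ℕ} (S : Finset (Fin (N+1))) : Set (Fin (N+1) → ℝ) :=
  {x ∈ stdSimp N | ∀ i ∉ S, x i = 0}

/-- The `k`-skeleton `Δ_k^N` of the standard `N`-simplex. -/
def skel (N k : ℕ) : Set (Fin (N+1) → ℝ) :=
  {x ∈ stdSimp N | {i | x i ≠ 0}.ncard ≤ k + 1}

/-- A Tverberg partition for (the relevant restriction of) `f`: a set of `q`
pairwise disjoint nonempty vertex subsets whose faces have images with a common point. -/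
def IsTverbergPartition (q : ℕ) {N d : ℕ}
    (f : (Fin (N+1) → ℝ) → Euc d) (P : Finset (Finset (Fin (N+1)))) : Prop :=
  P.card = q ∧ (∀ S ∈ P, S.Nonempty) ∧
  (∀ S ∈ P, ∀ T ∈ P, S ≠ T → Disjoint S T) ∧
  (⋂ S ∈ P, f '' simpFace S).Nonempty

/-- The boundary `∂σ_S` of the face `σ_S`. -/
def simpFaceBoundary {N : ℕ} (S : Finset (Fin (N+1))) : Set (Fin (N+1) → ℝ) :=
  {x ∈ simpFace S | ∃ i ∈ S, x i = 0}

/-- `p ∈ W_{≠0}(f|_{∂σ_S})`: either `p` is in the image of the boundary, or the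
corestriction of `f|_{∂σ_S}` to `ℝ^d \ {p}` is not nullhomotopic (there is no
continuous map agreeing with `f` on `∂σ_S` that is homotopic to a constant). -/
def InWne (d : ℕ) {N : ℕ} (f : (Fin (N+1) → ℝ) → Euc d)
    (S : Finset (Fin (N+1))) (p : Euc d) : Prop :=
  p ∈ f '' simpFaceBoundary S ∨
  ¬ ∃ (g : C(↥(simpFaceBoundary S), ↥({p}ᶜ : Set (Euc d))))
      (y : ↥({p}ᶜ : Set (Euc d))),
      (∀ x : ↥(simpFaceBoundary S), (g x : Euc d) = f ↑x) ∧
      g.Homotopic (ContinuousMap.const _ y)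

/-- A winding partition (in dimension `d`) for `f` defined on the `(d-1)`-skeleton:
`q` pairwise disjoint nonempty vertex subsets, each of size at most `d+1`, together
with a winding point `p`. -/
def IsWindingPartition (d q : ℕ) {N : ℕ}
    (f : (Fin (N+1) → ℝ) → Euc d) (P : Finset (Finset (Fin (N+1)))) : Prop :=
  P.card = q ∧ (∀ S ∈ P, S.Nonempty) ∧ (∀ S ∈ P, S.card ≤ d + 1) ∧
  (∀ S ∈ P, ∀ T ∈ P, S ≠ T → Disjoint S T) ∧
  ∃ p : Euc d, ∀ S ∈ P,
    (S.card ≤ d → p ∈ f '' simpFace S) ∧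
    (S.card = d + 1 → InWne d f S p)

section Aux

lemma euc1_ext {x y : Euc 1} (h : x 0 = y 0) : x = y := by
  ext i
  have hi : i = 0 := Subsingleton.elim i 0
  rw [hi]; exact h

def vert (N : ℕ) (i : Fin (N+1)) : Fin (N+1) → ℝ := fun j => if j = i then 1 else 0

lemma vert_mem_stdSimp (N : ℕ) (i : Fin (N+1)) : vert N i ∈ stdSimp N := by
  constructor
  · intro j; unfold vert; split <;> norm_num
  · simp [vert]

lemma vert_mem_simpFace {N : ℕ} {S : Finset (Fin (N+1))} {i : Fin (N+1)} (h : i ∈ S) :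
    vert N i ∈ simpFace S := by
  refine ⟨vert_mem_stdSimp N i, fun j hj => ?_⟩
  unfold vert
  exact if_neg (by rintro rfl; exact hj h)

lemma convex_simpFace {N : ℕ} (S : Finset (Fin (N+1))) : Convex ℝ (simpFace S) := by
  rintro x ⟨⟨hx0, hx1⟩, hx2⟩ y ⟨⟨hy0, hy1⟩, hy2⟩ a b ha hb hab
  refine ⟨⟨fun i => ?_, ?_⟩, fun i hi => ?_⟩
  · have h1 := hx0 i; have h2 := hy0 i
    simp only [Pi.add_apply, Pi.smul_apply, smul_eq_mul]
    nlinarith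
  · simp only [Pi.add_apply, Pi.smul_apply, smul_eq_mul, Finset.sum_add_distrib,
      ← Finset.mul_sum, hx1, hy1]
    linarith
  · simp only [Pi.add_apply, Pi.smul_apply, smul_eq_mul, hx2 i hi, hy2 i hi]
    ring

lemma mem_image_pair {N : ℕ} {f : (Fin (N+1) → ℝ) → Euc 1}
    (hf : ContinuousOn f (stdSimp N)) {a b : Fin (N+1)} {p : Euc 1}
    (h1 : f (vert N a) 0 ≤ p 0) (h2 : p 0 ≤ f (vert N b) 0) :
    p ∈ f '' simpFace {a, b} := by
  have hsub : simpFace ({a, b} : Finset (Fin (N+1))) ⊆ stdSimp N := fun x hx => hx.1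
  have hc : ContinuousOn (fun x => f x 0) (simpFace ({a, b} : Finset (Fin (N+1)))) :=
    ((EuclideanSpace.proj (0 : Fin 1)).continuous).comp_continuousOn (hf.mono hsub)
  have hA : vert N a ∈ simpFace ({a, b} : Finset (Fin (N+1))) :=
    vert_mem_simpFace (by simp)
  have hB : vert N b ∈ simpFace ({a, b} : Finset (Fin (N+1))) :=
    vert_mem_simpFace (by simp)
  obtain ⟨x, hx, hfx⟩ :=
    (convex_simpFace ({a, b} : Finset (Fin (N+1)))).isPreconnected.intermediate_value
      hA hB hc ⟨h1, h2⟩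
  exact ⟨x, hx, euc1_ext hfx⟩

lemma inWne_pair {N : ℕ} (f : (Fin (N+1) → ℝ) → Euc 1) {a b : Fin (N+1)} (hab : a ≠ b)
    {p : Euc 1} (h1 : f (vert N a) 0 ≤ p 0) (h2 : p 0 ≤ f (vert N b) 0) :
    InWne 1 f {a, b} p := by
  have hA : vert N a ∈ simpFaceBoundary ({a, b} : Finset (Fin (N+1))) :=
    ⟨vert_mem_simpFace (by simp), b, by simp, if_neg (Ne.symm hab)⟩
  have hB : vert N b ∈ simpFaceBoundary ({a, b} : Finset (Fin (N+1))) :=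
    ⟨vert_mem_simpFace (by simp), a, by simp, if_neg hab⟩
  rcases eq_or_lt_of_le h1 with he | h1'
  · exact Or.inl ⟨vert N a, hA, euc1_ext he⟩
  rcases eq_or_lt_of_le h2 with he | h2'
  · exact Or.inl ⟨vert N b, hB, euc1_ext he.symm⟩
  refine Or.inr ?_
  rintro ⟨g, y, hg, ⟨H⟩⟩
  set A : ↥(simpFaceBoundary ({a, b} : Finset (Fin (N+1)))) := ⟨vert N a, hA⟩ with hAdef
  set B : ↥(simpFaceBoundary ({a, b} : Finset (Fin (N+1)))) := ⟨vert N b, hB⟩ with hBdef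
  let p1 : Path (g A) y :=
    { toFun := fun t => H (t, A)
      continuous_toFun := H.continuous.comp (continuous_id.prodMk continuous_const)
      source' := H.apply_zero A
      target' := H.apply_one A }
  let p2 : Path (g B) y :=
    { toFun := fun t => H (t, B)
      continuous_toFun := H.continuous.comp (continuous_id.prodMk continuous_const)
      source' := H.apply_zero B
      target' := H.apply_one B }
  let γ : Path (g A) (g B) := p1.trans p2.symm
  set h : ℝ → ℝ := fun t => ((γ.extend t : Euc 1) 0) with hh
  have hcont : Continuous h := by
    exact (EuclideanSpace.proj (0 : Fin 1)).continuous.comp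
      (continuous_subtype_val.comp γ.continuous_extend)
  have h0 : h 0 = f (vert N a) 0 := by
    simp only [hh, γ.extend_zero]
    rw [hg A]
  have h1'' : h 1 = f (vert N b) 0 := by
    simp only [hh, γ.extend_one]
    rw [hg B]
  have hmem : p 0 ∈ Set.Icc (h 0) (h 1) := by
    rw [h0, h1'']; exact ⟨le_of_lt h1', le_of_lt h2'⟩
  obtain ⟨t, -, ht⟩ := intermediate_value_Icc (zero_le_one) hcont.continuousOn hmem
  have : (γ.extend t : Euc 1) = p := euc1_ext ht
  exact (γ.extend t).2 (by simp [this])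

-- ==== combinatorics ====

def lowIdx {n : ℕ} (i : Fin n) : Fin (2*n+1) := ⟨i.val, by have := i.isLt; omega⟩
def highIdx {n : ℕ} (i : Fin n) : Fin (2*n+1) := ⟨n+1+i.val, by have := i.isLt; omega⟩
def midIdx (n : ℕ) : Fin (2*n+1) := ⟨n, by omega⟩

lemma lowIdx_ne_midIdx {n : ℕ} (i : Fin n) : lowIdx i ≠ midIdx n := by
  have := i.isLt; simp only [lowIdx, midIdx, Ne, Fin.mk.injEq]; omega

lemma highIdx_ne_midIdx {n : ℕ} (i : Fin n) : highIdx i ≠ midIdx n := by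
  have := i.isLt; simp only [highIdx, midIdx, Ne, Fin.mk.injEq]; omega

lemma lowIdx_ne_highIdx {n : ℕ} (i j : Fin n) : lowIdx i ≠ highIdx j := by
  have := i.isLt; simp only [lowIdx, highIdx, Ne, Fin.mk.injEq]; omega

lemma lowIdx_injective {n : ℕ} : Function.Injective (lowIdx (n := n)) := by
  intro i j h
  have : i.val = j.val := by simpa [lowIdx, Fin.ext_iff] using h
  exact Fin.ext this

lemma highIdx_injective {n : ℕ} : Function.Injective (highIdx (n := n)) := by
  intro i j h
  have : i.val = j.val := by simpa [highIdx, Fin.ext_iff] using h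
  exact Fin.ext this

lemma lowIdx_le_midIdx {n : ℕ} (i : Fin n) : lowIdx i ≤ midIdx n := by
  have := i.isLt; simp only [lowIdx, midIdx, Fin.mk_le_mk]; omega

lemma midIdx_le_highIdx {n : ℕ} (i : Fin n) : midIdx n ≤ highIdx i := by
  simp only [highIdx, midIdx, Fin.mk_le_mk]; omega

def partOf {n : ℕ} (σ : Equiv.Perm (Fin (2*n+1))) (π : Equiv.Perm (Fin n)) :
    Finset (Finset (Fin (2*n+1))) :=
  insert {σ (midIdx n)}
    (Finset.image (fun i => ({σ (lowIdx i), σ (highIdx (π i))} : Finset (Fin (2*n+1))))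
      Finset.univ)

lemma mem_partOf {n : ℕ} {σ : Equiv.Perm (Fin (2*n+1))} {π : Equiv.Perm (Fin n)}
    {S : Finset (Fin (2*n+1))} :
    S ∈ partOf σ π ↔ S = {σ (midIdx n)} ∨
      ∃ i, S = {σ (lowIdx i), σ (highIdx (π i))} := by
  simp only [partOf, Finset.mem_insert, Finset.mem_image, Finset.mem_univ, true_and]
  constructor
  · rintro (h | ⟨i, hi⟩)
    · exact Or.inl h
    · exact Or.inr ⟨i, hi.symm⟩
  · rintro (h | ⟨i, hi⟩)
    · exact Or.inl h
    · exact Or.inr ⟨i, hi.symm⟩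

lemma pair_ne_mid {n : ℕ} (σ : Equiv.Perm (Fin (2*n+1))) (π : Equiv.Perm (Fin n))
    (i : Fin n) :
    ({σ (lowIdx i), σ (highIdx (π i))} : Finset (Fin (2*n+1))) ≠ {σ (midIdx n)} := by
  intro h
  have : σ (lowIdx i) ∈ ({σ (midIdx n)} : Finset (Fin (2*n+1))) := by
    rw [← h]; exact Finset.mem_insert_self _ _
  rw [Finset.mem_singleton] at this
  exact lowIdx_ne_midIdx i (σ.injective this)

lemma pair_inj {n : ℕ} (σ : Equiv.Perm (Fin (2*n+1))) (π : Equiv.Perm (Fin n)) :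
    Function.Injective
      (fun i => ({σ (lowIdx i), σ (highIdx (π i))} : Finset (Fin (2*n+1)))) := by
  intro i j h
  simp only at h
  have hm : σ (lowIdx i) ∈ ({σ (lowIdx j), σ (highIdx (π j))} : Finset (Fin (2*n+1))) := by
    rw [← h]; exact Finset.mem_insert_self _ _
  simp only [Finset.mem_insert, Finset.mem_singleton] at hm
  rcases hm with hm | hm
  · exact lowIdx_injective (σ.injective hm)
  · exact absurd (σ.injective hm) (lowIdx_ne_highIdx i (π j))

lemma card_partOf {n : ℕ} (σ : Equiv.Perm (Fin (2*n+1))) (π : Equiv.Perm (Fin n)) :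
    (partOf σ π).card = n + 1 := by
  unfold partOf
  rw [Finset.card_insert_of_notMem, Finset.card_image_of_injective _ (pair_inj σ π)]
  · simp
  · intro h
    simp only [Finset.mem_image, Finset.mem_univ, true_and] at h
    obtain ⟨i, hi⟩ := h
    exact pair_ne_mid σ π i hi

lemma partOf_pairwise_disjoint {n : ℕ} (σ : Equiv.Perm (Fin (2*n+1)))
    (π : Equiv.Perm (Fin n)) :
    ∀ S ∈ partOf σ π, ∀ T ∈ partOf σ π, S ≠ T → Disjoint S T := by
  intro S hS T hT hne
  rw [mem_partOf] at hS hT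
  rw [Finset.disjoint_left]
  intro x hxS hxT
  rcases hS with rfl | ⟨i, rfl⟩ <;> rcases hT with rfl | ⟨j, rfl⟩
  · exact hne rfl
  · rw [Finset.mem_singleton] at hxS
    subst hxS
    simp only [Finset.mem_insert, Finset.mem_singleton] at hxT
    rcases hxT with h | h
    · exact lowIdx_ne_midIdx j (σ.injective h.symm)
    · exact highIdx_ne_midIdx (π j) (σ.injective h.symm)
  · rw [Finset.mem_singleton] at hxT
    subst hxT
    simp only [Finset.mem_insert, Finset.mem_singleton] at hxS
    rcases hxS with h | h
    · exact lowIdx_ne_midIdx i (σ.injective h.symm)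
    · exact highIdx_ne_midIdx (π i) (σ.injective h.symm)
  · have hij : i ≠ j := by rintro rfl; exact hne rfl
    simp only [Finset.mem_insert, Finset.mem_singleton] at hxS hxT
    rcases hxS with rfl | rfl <;> rcases hxT with h | h
    · exact hij (lowIdx_injective (σ.injective h))
    · exact lowIdx_ne_highIdx i (π j) (σ.injective h)
    · exact lowIdx_ne_highIdx j (π i) (σ.injective h.symm)
    · exact hij (π.injective (highIdx_injective (σ.injective h)))

lemma partOf_injective {n : ℕ} (σ : Equiv.Perm (Fin (2*n+1))) :
    Function.Injective (partOf (n := n) σ) := by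
  intro π π' h
  apply Equiv.ext
  intro i
  have hmem : ({σ (lowIdx i), σ (highIdx (π i))} : Finset (Fin (2*n+1))) ∈ partOf σ π' := by
    rw [← h]; exact mem_partOf.mpr (Or.inr ⟨i, rfl⟩)
  rw [mem_partOf] at hmem
  rcases hmem with he | ⟨j, hj⟩
  · exact absurd he (pair_ne_mid σ π i)
  · have h1 : σ (lowIdx i) ∈ ({σ (lowIdx j), σ (highIdx (π' j))} : Finset (Fin (2*n+1))) := by
      rw [← hj]; exact Finset.mem_insert_self _ _
    simp only [Finset.mem_insert, Finset.mem_singleton] at h1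
    have hij : i = j := by
      rcases h1 with h1 | h1
      · exact lowIdx_injective (σ.injective h1)
      · exact absurd (σ.injective h1) (lowIdx_ne_highIdx i (π' j))
    subst hij
    have h2 : σ (highIdx (π i)) ∈
        ({σ (lowIdx i), σ (highIdx (π' i))} : Finset (Fin (2*n+1))) := by
      rw [← hj]; exact Finset.mem_insert_of_mem (Finset.mem_singleton_self _)
    simp only [Finset.mem_insert, Finset.mem_singleton] at h2
    rcases h2 with h2 | h2
    · exact absurd (σ.injective h2).symm (lowIdx_ne_highIdx i (π i))
    · exact highIdx_injective (σ.injective h2)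

lemma count_partitions {n : ℕ} (σ : Equiv.Perm (Fin (2*n+1)))
    (Q : Finset (Finset (Fin (2*n+1))) → Prop)
    (hQ : ∀ π : Equiv.Perm (Fin n), Q (partOf σ π)) :
    Nat.factorial n ≤ {P | Q P}.ncard := by
  have hsub : Set.range (partOf σ) ⊆ {P | Q P} := by rintro _ ⟨π, rfl⟩; exact hQ π
  have h1 : (Set.range (partOf σ)).ncard = Nat.factorial n := by
    rw [← Nat.card_coe_set_eq, Nat.card_range_of_injective (partOf_injective σ)]
    simp [Nat.card_eq_fintype_card, Fintype.card_perm, Fintype.card_fin]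
  rw [← h1]
  exact Set.ncard_le_ncard hsub (Set.toFinite _)
end Aux

/-- The case `d = 1`: (a) every continuous map `Δ_0^{2(q-1)} → ℝ` has at least
`(q-1)!` winding partitions; (b) every continuous map `Δ^{2(q-1)} → ℝ` has at
least `(q-1)!` Tverberg partitions. -/
theorem winding_count_dim_one (q : ℕ) (hq : 1 ≤ q) :
    (∀ f : (Fin (2*(q-1)+1) → ℝ) → Euc 1,
      ContinuousOn f (skel (2*(q-1)) 0) →
      Nat.factorial (q-1) ≤
        {P : Finset (Finset (Fin (2*(q-1)+1))) | IsWindingPartition 1 q f P}.ncard) ∧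
    (∀ f : (Fin (2*(q-1)+1) → ℝ) → Euc 1,
      ContinuousOn f (stdSimp (2*(q-1))) →
      Nat.factorial (q-1) ≤
        {P : Finset (Finset (Fin (2*(q-1)+1))) | IsTverbergPartition q f P}.ncard) := by
  obtain ⟨n, rfl⟩ : ∃ n, q = n + 1 := ⟨q - 1, by omega⟩
  simp only [Nat.add_sub_cancel]
  constructor
  · -- winding part
    intro f _hf
    set v : Fin (2*n+1) → ℝ := fun i => f (vert (2*n) i) 0 with hv
    set σ := Tuple.sort v with hσ
    have hmono : Monotone (v ∘ σ) := Tuple.monotone_sort v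
    set p : Euc 1 := f (vert (2*n) (σ (midIdx n))) with hp
    refine count_partitions σ _ (fun π => ?_)
    refine ⟨card_partOf σ π, ?_, ?_, partOf_pairwise_disjoint σ π, p, ?_⟩
    · intro S hS
      rcases mem_partOf.mp hS with rfl | ⟨i, rfl⟩
      · exact Finset.singleton_nonempty _
      · exact Finset.insert_nonempty _ _
    · intro S hS
      rcases mem_partOf.mp hS with rfl | ⟨i, rfl⟩
      · simp
      · exact (Finset.card_insert_le _ _).trans (by simp)
    · intro S hS
      rcases mem_partOf.mp hS with rfl | ⟨i, rfl⟩
      · constructor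
        · intro _
          exact ⟨vert (2*n) (σ (midIdx n)),
            vert_mem_simpFace (Finset.mem_singleton_self _), rfl⟩
        · intro h
          simp at h
      · have hne : σ (lowIdx i) ≠ σ (highIdx (π i)) :=
          fun h => lowIdx_ne_highIdx i (π i) (σ.injective h)
        have hcard : ({σ (lowIdx i), σ (highIdx (π i))} : Finset (Fin (2*n+1))).card = 2 := by
          rw [Finset.card_insert_of_notMem (by simpa using hne)]
          simp
        constructor
        · intro h; rw [hcard] at h; omega
        · intro _
          have hlo : v (σ (lowIdx i)) ≤ v (σ (midIdx n)) := hmono (lowIdx_le_midIdx i)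
          have hhi : v (σ (midIdx n)) ≤ v (σ (highIdx (π i))) := hmono (midIdx_le_highIdx (π i))
          exact inWne_pair f hne hlo hhi
  · -- Tverberg part
    intro f hf
    set v : Fin (2*n+1) → ℝ := fun i => f (vert (2*n) i) 0 with hv
    set σ := Tuple.sort v with hσ
    have hmono : Monotone (v ∘ σ) := Tuple.monotone_sort v
    set p : Euc 1 := f (vert (2*n) (σ (midIdx n))) with hp
    refine count_partitions σ _ (fun π => ?_)
    refine ⟨card_partOf σ π, ?_, partOf_pairwise_disjoint σ π, p, ?_⟩
    · intro S hS
      rcases mem_partOf.mp hS with rfl | ⟨i, rfl⟩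
      · exact Finset.singleton_nonempty _
      · exact Finset.insert_nonempty _ _
    · rw [Set.mem_iInter₂]
      intro S hS
      rcases mem_partOf.mp hS with rfl | ⟨i, rfl⟩
      · exact ⟨vert (2*n) (σ (midIdx n)),
          vert_mem_simpFace (Finset.mem_singleton_self _), rfl⟩
      · have hlo : v (σ (lowIdx i)) ≤ v (σ (midIdx n)) := hmono (lowIdx_le_midIdx i)
        have hhi : v (σ (midIdx n)) ≤ v (σ (highIdx (π i))) := hmono (midIdx_le_highIdx (π i))
        exact mem_image_pair hf hlo hhi
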